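/- For every n ≥ 2 and every link pattern π′ of n strands that pairs 2n−2 with 2n−1, if m is the exposure number of π′, then for each j with 1 ≤ j ≤ m there is exactly one link pattern μ of n strands with e(μ) = π′ and exposure number of μ equal to j; i.e., the exposure number is a bijection from the fiber e⁻¹(π′) onto {1, 2, …, m}. -/

import Mathlib

/-- A link pattern of `n` strands: a fixed-point-free involution of `{0, …, 2n-1}`
that is noncrossing. -/
def IsLinkPattern (n : ℕ) (μ : Fin (2*n) → Fin (2*n)) : Prop :=
  (∀ i, μ (μ i) = i) ∧ (∀ i, μ i ≠ i) ∧
  (∀ a b c d : Fin (2*n), a < b → b < c → c < d → μ a = c → μ b = d → False)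

/-- The exposure number of `μ`: the number of outermost links `(a, b)` (pairs with
`a < b`, `μ a = b`, such that there is no link `(c, d)` with `c < a` and `b < d`). -/
noncomputable def exposure (n : ℕ) (μ : Fin (2*n) → Fin (2*n)) : ℕ :=
  Nat.card {p : Fin (2*n) × Fin (2*n) //
    p.1 < p.2 ∧ μ p.1 = p.2 ∧ ∀ c d : Fin (2*n), c < p.1 → p.2 < d → μ c ≠ d}

/-- The Temperley–Lieb generator `e` (acting at the sites `2n-2`, `2n-1`):
`e(μ) = μ` if `μ (2n-2) = 2n-1`; otherwise `e(μ)` pairs `2n-2` with `2n-1`,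
pairs `μ (2n-2)` with `μ (2n-1)`, and agrees with `μ` elsewhere. -/
def eFun (n : ℕ) (μ : Fin (2*n) → Fin (2*n)) : Fin (2*n) → Fin (2*n) := fun i =>
  if h : 1 ≤ n then
    let a : Fin (2*n) := ⟨2*n - 2, by omega⟩
    let b : Fin (2*n) := ⟨2*n - 1, by omega⟩
    if μ a = b then μ i
    else if i = a then b
    else if i = b then a
    else if i = μ a then μ b
    else if i = μ b then μ a
    else μ i
  else μ i

section RankBij
open Set

lemma rank_bij {α : Type*} [LinearOrder α] (D : Set α) (hD : D.Finite) (j : ℕ)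
    (h1 : 1 ≤ j) (h2 : j ≤ D.ncard) :
    ∃! x, x ∈ D ∧ ({d ∈ D | d ≤ x}).ncard = j := by
  set rk : α → ℕ := fun x => ({d ∈ D | d ≤ x}).ncard with hrk
  have hfin : ∀ x, ({d ∈ D | d ≤ x}).Finite := fun x => hD.subset (fun d hd => hd.1)
  have hmono : ∀ x ∈ D, ∀ x' ∈ D, x < x' → rk x < rk x' := by
    intro x hx x' hx' hlt
    apply Set.ncard_lt_ncard _ (hfin x')
    constructor
    · exact fun d hd => ⟨hd.1, le_trans hd.2 hlt.le⟩
    · intro hsub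
      have := hsub ⟨hx', le_refl x'⟩
      exact absurd this.2 (not_le.mpr hlt)
  have hinj : Set.InjOn rk D := by
    intro x hx x' hx' heq
    rcases lt_trichotomy x x' with h | h | h
    · exact absurd heq (Nat.ne_of_lt (hmono x hx x' hx' h))
    · exact h
    · exact absurd heq.symm (Nat.ne_of_lt (hmono x' hx' x hx h))
  have hsub : rk '' D ⊆ Set.Icc 1 D.ncard := by
    rintro _ ⟨x, hx, rfl⟩
    constructor
    · have : ({d ∈ D | d ≤ x}).Nonempty := ⟨x, hx, le_refl x⟩
      exact (Set.ncard_pos (hfin x)).mpr this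
    · exact Set.ncard_le_ncard (fun d hd => hd.1) hD
  have hicc : (Set.Icc 1 D.ncard).ncard = D.ncard := by
    rw [← Finset.coe_Icc, Set.ncard_coe_finset, Nat.card_Icc]; omega
  have heq : rk '' D = Set.Icc 1 D.ncard := by
    apply Set.eq_of_subset_of_ncard_le hsub
    rw [hicc, Set.ncard_image_of_injOn hinj]
  have hj : j ∈ rk '' D := heq ▸ ⟨h1, h2⟩
  obtain ⟨x, hx, hxj⟩ := hj
  exact ⟨x, ⟨hx, hxj⟩, fun y ⟨hy, hyj⟩ => hinj hy hx (hyj.trans hxj.symm)⟩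

end RankBij
namespace TLP
open Set

variable {n : ℕ}

def outSet (n : ℕ) (μ : Fin (2*n) → Fin (2*n)) : Set (Fin (2*n) × Fin (2*n)) :=
  {p | p.1 < p.2 ∧ μ p.1 = p.2 ∧ ∀ c d : Fin (2*n), c < p.1 → p.2 < d → μ c ≠ d}

lemma exposure_eq (n : ℕ) (μ : Fin (2*n) → Fin (2*n)) :
    exposure n μ = (outSet n μ).ncard := by
  rw [← Nat.card_coe_set_eq]
  rfl

lemma lp_inj {μ : Fin (2*n) → Fin (2*n)} (h : IsLinkPattern n μ) :
    Function.Injective μ :=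
  Function.LeftInverse.injective h.1

/-- a point strictly inside a link maps strictly inside. -/
lemma nested {μ : Fin (2*n) → Fin (2*n)} (h : IsLinkPattern n μ)
    {u w : Fin (2*n)} (h1 : u < w) (h2 : w < μ u) : u < μ w ∧ μ w < μ u := by
  have hne1 : μ w ≠ u := by
    intro he
    have : w = μ u := by rw [← h.1 w, he]
    exact absurd this (ne_of_lt h2)
  have hne2 : μ w ≠ μ u := fun he => absurd (lp_inj h he) (ne_of_gt h1)
  rcases lt_trichotomy (μ w) u with hc | hc | hc
  · exact absurd (h.2.2 (μ w) u w (μ u) hc h1 h2 (h.1 w) rfl) id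
  · exact absurd hc hne1
  rcases lt_trichotomy (μ w) (μ u) with hd | hd | hd
  · exact ⟨hc, hd⟩
  · exact absurd hd hne2
  · exact absurd (h.2.2 u w (μ u) (μ w) h1 h2 hd rfl rfl) id

/-- outermost links are pairwise disjoint as intervals. -/
lemma disj {μ : Fin (2*n) → Fin (2*n)} (h : IsLinkPattern n μ)
    {p q : Fin (2*n) × Fin (2*n)} (hp : p ∈ outSet n μ) (hq : q ∈ outSet n μ)
    (hne : p ≠ q) : p.2 < q.1 ∨ q.2 < p.1 := by
  have key : ∀ r s : Fin (2*n) × Fin (2*n), r ∈ outSet n μ → s ∈ outSet n μ →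
      r.1 < s.1 → r.2 < s.1 := by
    intro r s hr hs hlt
    by_contra hcon
    push_neg at hcon
    have hne2 : s.1 ≠ r.2 := by
      intro he
      have h2 : s.2 = r.1 := by rw [← hs.2.1, he, ← hr.2.1, h.1]
      have : s.1 < r.1 := h2 ▸ hs.1
      exact absurd hlt (not_lt.mpr this.le)
    have hin : s.1 < r.2 := lt_of_le_of_ne hcon hne2
    have := nested h hlt (by rw [hr.2.1]; exact hin)
    have hs2 : s.2 < r.2 := by rw [← hs.2.1]; rw [hr.2.1] at this; exact this.2
    exact hs.2.2 r.1 r.2 hlt hs2 hr.2.1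
  have h1ne : p.1 ≠ q.1 := by
    intro he
    apply hne
    have : p.2 = q.2 := by rw [← hp.2.1, ← hq.2.1, he]
    exact Prod.ext he this
  rcases lt_or_gt_of_ne h1ne with hlt | hlt
  · exact Or.inl (key p q hp hq hlt)
  · exact Or.inr (key q p hq hp hlt)

end TLP
namespace TLP2
open TLP Set

variable {n : ℕ}

/-- left site -/
def va (n : ℕ) (hn : 2 ≤ n) : Fin (2*n) := ⟨2*n-2, Nat.sub_lt (by omega) (by omega)⟩
/-- right site -/
def vb (n : ℕ) (hn : 2 ≤ n) : Fin (2*n) := ⟨2*n-1, Nat.sub_lt (by omega) Nat.one_pos⟩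

@[simp] lemma va_val (hn : 2 ≤ n) : (va n hn : ℕ) = 2*n-2 := rfl
@[simp] lemma vb_val (hn : 2 ≤ n) : (vb n hn : ℕ) = 2*n-1 := rfl

/-- the modified pattern: pairs `va ↔ x` and `vb ↔ y`, `π'` elsewhere. -/
def mk (n : ℕ) (hn : 2 ≤ n) (π' : Fin (2*n) → Fin (2*n)) (x y : Fin (2*n)) :
    Fin (2*n) → Fin (2*n) := fun i =>
  if i = va n hn then x
  else if i = x then va n hn
  else if i = vb n hn then y
  else if i = y then vb n hn
  else π' i

section
variable {π' : Fin (2*n) → Fin (2*n)} {x y : Fin (2*n)}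
variable (hn : 2 ≤ n)

lemma mk_va : mk n hn π' x y (va n hn) = x := by
  simp [mk]

lemma mk_x (hx2 : (x:ℕ) < 2*n-2) : mk n hn π' x y x = va n hn := by
  have h1 : x ≠ va n hn := Fin.ne_of_val_ne (by simp only [va_val]; omega)
  simp [mk, h1]

lemma mk_vb (hx2 : (x:ℕ) < 2*n-2) : mk n hn π' x y (vb n hn) = y := by
  have h1 : vb n hn ≠ va n hn := Fin.ne_of_val_ne (by simp only [va_val, vb_val]; omega)
  have hx : (x:ℕ) < 2*n := x.2
  have h2 : vb n hn ≠ x := Fin.ne_of_val_ne (by simp only [vb_val]; omega)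
  simp [mk, h1, h2]

lemma mk_y (hyx : y < x) (hx2 : (x:ℕ) < 2*n-2) : mk n hn π' x y y = vb n hn := by
  have hy2 : (y:ℕ) < 2*n-2 := lt_trans hyx hx2
  have h1 : y ≠ va n hn := Fin.ne_of_val_ne (by simp only [va_val]; omega)
  have h2 : y ≠ x := ne_of_lt hyx
  have h3 : y ≠ vb n hn := Fin.ne_of_val_ne (by simp only [vb_val]; omega)
  simp [mk, h1, h2, h3]

lemma mk_other {i : Fin (2*n)} (h1 : i ≠ va n hn) (h2 : i ≠ x) (h3 : i ≠ vb n hn)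
    (h4 : i ≠ y) : mk n hn π' x y i = π' i := by
  simp [mk, h1, h2, h3, h4]

end
end TLP2
namespace TLP2
open TLP Set

variable {n : ℕ} {π' : Fin (2*n) → Fin (2*n)} {x y : Fin (2*n)}

lemma eFun_apply (hn : 2 ≤ n) (μ : Fin (2*n) → Fin (2*n)) (i : Fin (2*n)) :
    eFun n μ i =
      if μ (va n hn) = vb n hn then μ i
      else if i = va n hn then vb n hn
      else if i = vb n hn then va n hn
      else if i = μ (va n hn) then μ (vb n hn)
      else if i = μ (vb n hn) then μ (va n hn)
      else μ i := by
  have h1n : 1 ≤ n := by omega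
  simp only [eFun, dif_pos h1n]
  rfl

lemma pi_vb (hn : 2 ≤ n) (hπ' : IsLinkPattern n π')
    (hpair : π' (va n hn) = vb n hn) : π' (vb n hn) = va n hn := by
  rw [← hpair, hπ'.1]

lemma pi_x (hn : 2 ≤ n) (hπ' : IsLinkPattern n π')
    (hS : (y, x) ∈ outSet n π') : π' x = y := by
  have h : π' y = x := hS.2.1
  rw [← h, hπ'.1]

lemma mk_involutive (hn : 2 ≤ n) (hπ' : IsLinkPattern n π')
    (hpair : π' (va n hn) = vb n hn)
    (hS : (y, x) ∈ outSet n π') (hx2 : (x:ℕ) < 2*n-2) :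
    ∀ i, mk n hn π' x y (mk n hn π' x y i) = i := by
  have hyx : y < x := hS.1
  intro i
  by_cases h1 : i = va n hn
  · rw [h1, mk_va hn, mk_x hn hx2]
  by_cases h2 : i = x
  · rw [h2, mk_x hn hx2, mk_va hn]
  by_cases h3 : i = vb n hn
  · rw [h3, mk_vb hn hx2, mk_y hn hyx hx2]
  by_cases h4 : i = y
  · rw [h4, mk_y hn hyx hx2, mk_vb hn hx2]
  rw [mk_other hn h1 h2 h3 h4]
  have hxy : π' y = x := hS.2.1
  have g1 : π' i ≠ va n hn := by
    intro h
    apply h3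
    rw [← hπ'.1 i, h, hpair]
  have g2 : π' i ≠ x := by
    intro h
    apply h4
    rw [← hπ'.1 i, h, pi_x hn hπ' hS]
  have g3 : π' i ≠ vb n hn := by
    intro h
    apply h1
    rw [← hπ'.1 i, h, pi_vb hn hπ' hpair]
  have g4 : π' i ≠ y := by
    intro h
    apply h2
    rw [← hπ'.1 i, h, hxy]
  rw [mk_other hn g1 g2 g3 g4, hπ'.1]

lemma mk_inj (hn : 2 ≤ n) (hπ' : IsLinkPattern n π')
    (hpair : π' (va n hn) = vb n hn)
    (hS : (y, x) ∈ outSet n π') (hx2 : (x:ℕ) < 2*n-2) :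
    Function.Injective (mk n hn π' x y) :=
  Function.LeftInverse.injective (mk_involutive hn hπ' hpair hS hx2)

lemma mk_fpf (hn : 2 ≤ n) (hπ' : IsLinkPattern n π')
    (hS : (y, x) ∈ outSet n π') (hx2 : (x:ℕ) < 2*n-2) :
    ∀ i, mk n hn π' x y i ≠ i := by
  have hyx : y < x := hS.1
  have hyx' : (y:ℕ) < (x:ℕ) := hyx
  intro i
  by_cases h1 : i = va n hn
  · rw [h1, mk_va hn]; exact Fin.ne_of_val_ne (show (x:ℕ) ≠ 2*n-2 by omega)
  by_cases h2 : i = x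
  · rw [h2, mk_x hn hx2]; exact Fin.ne_of_val_ne (show (2*n-2:ℕ) ≠ (x:ℕ) by omega)
  by_cases h3 : i = vb n hn
  · rw [h3, mk_vb hn hx2]; exact Fin.ne_of_val_ne (show (y:ℕ) ≠ 2*n-1 by omega)
  by_cases h4 : i = y
  · rw [h4, mk_y hn hyx hx2]; exact Fin.ne_of_val_ne (show (2*n-1:ℕ) ≠ (y:ℕ) by omega)
  rw [mk_other hn h1 h2 h3 h4]
  exact hπ'.2.1 i

lemma mk_noncross (hn : 2 ≤ n) (hπ' : IsLinkPattern n π')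
    (hpair : π' (va n hn) = vb n hn)
    (hS : (y, x) ∈ outSet n π') (hx2 : (x:ℕ) < 2*n-2) :
    ∀ c d e f : Fin (2*n), c < d → d < e → e < f →
    mk n hn π' x y c = e → mk n hn π' x y d = f → False := by
  have hyx : y < x := hS.1
  have hyx' : (y:ℕ) < (x:ℕ) := hyx
  have hxy : π' y = x := hS.2.1
  have hout := hS.2.2
  intro c d e f hcd hde hef h1 h2
  by_cases hc1 : c = va n hn
  · rw [hc1, mk_va hn] at h1
    have hlt : c < e := lt_trans hcd hde
    rw [hc1, ← h1] at hlt
    have : (2*n-2 : ℕ) < (x:ℕ) := hlt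
    omega
  by_cases hc3 : c = vb n hn
  · rw [hc3] at hcd
    have : (2*n-1 : ℕ) < (d:ℕ) := hcd
    have := d.2; omega
  by_cases hc2 : c = x
  · rw [hc2, mk_x hn hx2] at h1
    rw [← h1] at hef
    have hef' : (2*n-2:ℕ) < (f:ℕ) := hef
    have hf2 := f.2
    have hf : f = vb n hn := Fin.ext_iff.mpr (by simp only [vb_val]; omega)
    rw [hf, ← mk_y hn hyx hx2] at h2
    have hd : d = y := mk_inj hn hπ' hpair hS hx2 h2
    rw [hc2, hd] at hcd
    exact absurd hcd (not_lt.mpr hyx.le)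
  by_cases hc4 : c = y
  · rw [hc4, mk_y hn hyx hx2] at h1
    rw [← h1] at hef
    have : (2*n-1:ℕ) < (f:ℕ) := hef
    have := f.2; omega
  rw [mk_other hn hc1 hc2 hc3 hc4] at h1
  by_cases hd1 : d = va n hn
  · rw [hd1, mk_va hn] at h2
    have hlt : d < f := lt_trans hde hef
    rw [hd1, ← h2] at hlt
    have : (2*n-2:ℕ) < (x:ℕ) := hlt
    omega
  by_cases hd3 : d = vb n hn
  · rw [hd3] at hde
    have : (2*n-1:ℕ) < (e:ℕ) := hde
    have := e.2; omega
  by_cases hd2 : d = x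
  · rw [hd2] at hcd hde
    rcases lt_trichotomy c y with hcy | hcy | hcy
    · exact hout c e hcy hde h1
    · exact hc4 hcy
    · have hnest := nested hπ' hcy (by rw [hxy]; exact hcd)
      rw [h1, hxy] at hnest
      exact absurd hde (not_lt.mpr hnest.2.le)
  by_cases hd4 : d = y
  · rw [hd4] at hcd hde
    rcases lt_trichotomy e x with hex | hex | hex
    · exact hπ'.2.2 c y e x hcd hde hex h1 hxy
    · apply hc4
      rw [← hπ'.1 c, h1, hex, pi_x hn hπ' hS]
    · exact hout c e hcd hex h1
  rw [mk_other hn hd1 hd2 hd3 hd4] at h2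
  exact hπ'.2.2 c d e f hcd hde hef h1 h2

lemma mk_isLP (hn : 2 ≤ n) (hπ' : IsLinkPattern n π')
    (hpair : π' (va n hn) = vb n hn)
    (hS : (y, x) ∈ outSet n π') (hx2 : (x:ℕ) < 2*n-2) :
    IsLinkPattern n (mk n hn π' x y) :=
  ⟨mk_involutive hn hπ' hpair hS hx2, mk_fpf hn hπ' hS hx2,
    mk_noncross hn hπ' hpair hS hx2⟩

lemma mk_eFun (hn : 2 ≤ n) (hπ' : IsLinkPattern n π')
    (hpair : π' (va n hn) = vb n hn)
    (hS : (y, x) ∈ outSet n π') (hx2 : (x:ℕ) < 2*n-2) :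
    eFun n (mk n hn π' x y) = π' := by
  have hyx : y < x := hS.1
  have hyx' : (y:ℕ) < (x:ℕ) := hyx
  funext i
  rw [eFun_apply hn, mk_va hn, mk_vb hn hx2]
  have hxvb : x ≠ vb n hn := Fin.ne_of_val_ne (show (x:ℕ) ≠ 2*n-1 by omega)
  rw [if_neg hxvb]
  by_cases h1 : i = va n hn
  · rw [if_pos h1, h1, hpair]
  rw [if_neg h1]
  by_cases h3 : i = vb n hn
  · rw [if_pos h3, h3, pi_vb hn hπ' hpair]
  rw [if_neg h3]
  by_cases h2 : i = x
  · rw [if_pos h2, h2, pi_x hn hπ' hS]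
  rw [if_neg h2]
  by_cases h4 : i = y
  · rw [if_pos h4, h4, hS.2.1]
  rw [if_neg h4]
  exact mk_other hn h1 h2 h3 h4

end TLP2
namespace TLP2
open TLP Set

variable {n : ℕ} {π' : Fin (2*n) → Fin (2*n)}

lemma eFun_of_pair (hn : 2 ≤ n) {μ : Fin (2*n) → Fin (2*n)}
    (hab : μ (va n hn) = vb n hn) : eFun n μ = μ := by
  funext i; rw [eFun_apply hn, if_pos hab]

lemma fiber_struct (hn : 2 ≤ n) {μ : Fin (2*n) → Fin (2*n)} (hμ : IsLinkPattern n μ)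
    (hE : eFun n μ = π') (hab : μ (va n hn) ≠ vb n hn) :
    (μ (vb n hn), μ (va n hn)) ∈ outSet n π' ∧ ((μ (va n hn) : ℕ) < 2*n-2) ∧
      μ = mk n hn π' (μ (va n hn)) (μ (vb n hn)) := by
  set x := μ (va n hn) with hxdef
  set y := μ (vb n hn) with hydef
  have F : ∀ i : Fin (2*n), π' i =
      (if i = va n hn then vb n hn
       else if i = vb n hn then va n hn
       else if i = x then y
       else if i = y then x
       else μ i) := by
    intro i
    rw [← hE, eFun_apply hn, if_neg hab]
  have hx1 : x ≠ va n hn := hμ.2.1 (va n hn)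
  have hx2 : x ≠ vb n hn := hab
  have hy2 : y ≠ vb n hn := hμ.2.1 (vb n hn)
  have hy1 : y ≠ va n hn := by
    intro h
    apply hab
    rw [hxdef, ← h, hydef, hμ.1]
  have hxval : (x:ℕ) < 2*n-2 := by
    have := x.2
    have g1 : (x:ℕ) ≠ 2*n-2 := fun h => hx1 (Fin.ext_iff.mpr h)
    have g2 : (x:ℕ) ≠ 2*n-1 := fun h => hx2 (Fin.ext_iff.mpr h)
    omega
  have hyval : (y:ℕ) < 2*n-2 := by
    have := y.2
    have g1 : (y:ℕ) ≠ 2*n-2 := fun h => hy1 (Fin.ext_iff.mpr h)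
    have g2 : (y:ℕ) ≠ 2*n-1 := fun h => hy2 (Fin.ext_iff.mpr h)
    omega
  have hxy_ne : x ≠ y := by
    intro h
    have : va n hn = vb n hn := lp_inj hμ (by rw [← hxdef, ← hydef, h])
    rw [Fin.ext_iff] at this
    simp only [va_val, vb_val] at this
    omega
  have hpx : π' x = y := by
    have h := F x
    rw [if_neg hx1, if_neg hx2, if_pos rfl] at h
    exact h
  have hpy : π' y = x := by
    have h := F y
    rw [if_neg hy1, if_neg hy2, if_neg (fun hh => hxy_ne hh.symm), if_pos rfl] at h
    exact h
  have hμx : μ x = va n hn := hμ.1 (va n hn)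
  have hμy : μ y = vb n hn := hμ.1 (vb n hn)
  have hyx : y < x := by
    rcases lt_trichotomy y x with h | h | h
    · exact h
    · exact absurd h.symm hxy_ne
    · exfalso
      have hyva : x < va n hn := Fin.lt_def.mpr (by simp only [va_val]; omega)
      have hyvb : va n hn < vb n hn := Fin.lt_def.mpr (by simp only [va_val, vb_val]; omega)
      exact hμ.2.2 x y (va n hn) (vb n hn) h (Fin.lt_def.mpr (by simp only [va_val]; omega))
        hyvb hμx hμy
  refine ⟨⟨hyx, hpy, ?_⟩, hxval, ?_⟩
  · intro c d hc hd hcd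
    have hc' : c < y := hc
    have hd' : x < d := hd
    have hcv : (c:ℕ) < (y:ℕ) := hc'
    have hcna : c ≠ va n hn := Fin.ne_of_val_ne (by simp only [va_val]; omega)
    have hcnb : c ≠ vb n hn := Fin.ne_of_val_ne (by simp only [vb_val]; omega)
    have hcnx : c ≠ x := Fin.ne_of_val_ne (by
      have : (y:ℕ) < (x:ℕ) := hyx
      omega)
    have hcny : c ≠ y := Fin.ne_of_val_ne (by omega)
    have hμc : μ c = d := by
      have h := F c
      rw [if_neg hcna, if_neg hcnb, if_neg hcnx, if_neg hcny] at h
      rw [← h, hcd]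
    have hdna : d ≠ va n hn := by
      intro h
      apply hcnx
      apply lp_inj hμ
      rw [hμc, hμx, h]
    have hdnb : d ≠ vb n hn := by
      intro h
      apply hcny
      apply lp_inj hμ
      rw [hμc, hμy, h]
    have hdvb : d < vb n hn := Fin.lt_def.mpr (by
      have := d.2
      have g1 : (d:ℕ) ≠ 2*n-1 := fun hh => hdnb (Fin.ext_iff.mpr hh)
      simp only [vb_val]
      omega)
    have hyd : y < d := lt_trans hyx hd'
    exact hμ.2.2 c y d (vb n hn) hc' hyd hdvb hμc hμy
  · funext i
    by_cases h1 : i = va n hn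
    · rw [h1, mk_va hn, ← hxdef]
    by_cases h2 : i = x
    · rw [h2, mk_x hn hxval, hμx]
    by_cases h3 : i = vb n hn
    · rw [h3, mk_vb hn hxval, ← hydef]
    by_cases h4 : i = y
    · rw [h4, mk_y hn hyx hxval, hμy]
    rw [mk_other hn h1 h2 h3 h4]
    have h := F i
    rw [if_neg h1, if_neg h3, if_neg h2, if_neg h4] at h
    exact h.symm

end TLP2
namespace TLP2
open TLP Set

variable {n : ℕ} {π' : Fin (2*n) → Fin (2*n)} {x y : Fin (2*n)}

/-- outermost links other than the last one -/
def Slo (n : ℕ) (π' : Fin (2*n) → Fin (2*n)) : Set (Fin (2*n) × Fin (2*n)) :=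
  {p ∈ outSet n π' | (p.2:ℕ) < 2*n-2}

/-- their right endpoints -/
def Dse (n : ℕ) (π' : Fin (2*n) → Fin (2*n)) : Set (Fin (2*n)) :=
  Prod.snd '' Slo n π'

/-- the rank of a right endpoint -/
noncomputable def rkD (n : ℕ) (π' : Fin (2*n) → Fin (2*n)) (x : Fin (2*n)) : ℕ :=
  {d ∈ Dse n π' | d ≤ x}.ncard

lemma fst_eq (hπ' : IsLinkPattern n π') {p : Fin (2*n) × Fin (2*n)}
    (hp : p ∈ outSet n π') : p.1 = π' p.2 := by
  rw [← hp.2.1, hπ'.1]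

lemma snd_injOn (hπ' : IsLinkPattern n π') : InjOn Prod.snd (Slo n π') := by
  intro p hp q hq h
  exact Prod.ext (by rw [fst_eq hπ' hp.1, fst_eq hπ' hq.1, h]) h

lemma mem_Dse (hπ' : IsLinkPattern n π') {x : Fin (2*n)} :
    x ∈ Dse n π' ↔ (π' x, x) ∈ outSet n π' ∧ (x:ℕ) < 2*n-2 := by
  constructor
  · rintro ⟨q, hq, rfl⟩
    have hq' : (π' q.2, q.2) = q := Prod.ext (fst_eq hπ' hq.1).symm rfl
    rw [hq']
    exact ⟨hq.1, hq.2⟩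
  · intro h
    exact ⟨(π' x, x), ⟨h.1, h.2⟩, rfl⟩

lemma mem_outSet_last (hn : 2 ≤ n) (hpair : π' (va n hn) = vb n hn) :
    (va n hn, vb n hn) ∈ outSet n π' := by
  refine ⟨Fin.lt_def.mpr (by simp only [va_val, vb_val]; omega), hpair, ?_⟩
  intro c d hc hd hcd
  have hd' : (2*n-1:ℕ) < (d:ℕ) := hd
  have := d.2
  omega

lemma outSet_decomp (hn : 2 ≤ n) (hπ' : IsLinkPattern n π')
    (hpair : π' (va n hn) = vb n hn) :
    outSet n π' = insert (va n hn, vb n hn) (Slo n π') := by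
  ext p
  constructor
  · intro hp
    by_cases h : (p.2:ℕ) < 2*n-2
    · exact Set.mem_insert_of_mem _ ⟨hp, h⟩
    · have h2 := p.2.2
      have hne : p.2 ≠ va n hn := by
        intro hh
        have h1 : p.1 = π' (va n hn) := by rw [← hh, fst_eq hπ' hp]
        rw [hpair] at h1
        have : (p.1:ℕ) < (p.2:ℕ) := hp.1
        rw [h1, hh] at this
        simp only [va_val, vb_val] at this
        omega
      have hvb : p.2 = vb n hn := by
        apply Fin.ext_iff.mpr
        simp only [vb_val]
        have : (p.2:ℕ) ≠ 2*n-2 := fun hh => hne (Fin.ext_iff.mpr hh)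
        omega
      have hva : p.1 = va n hn := by
        rw [fst_eq hπ' hp, hvb, pi_vb hn hπ' hpair]
      left
      exact Prod.ext hva hvb
  · intro hp
    rcases hp with hp | hp
    · rw [hp]; exact mem_outSet_last hn hpair
    · exact hp.1

lemma vab_not_mem_Slo (hn : 2 ≤ n) : (va n hn, vb n hn) ∉ Slo n π' := by
  intro h
  have := h.2
  simp only [vb_val] at this
  omega

lemma ncard_outSet (hn : 2 ≤ n) (hπ' : IsLinkPattern n π')
    (hpair : π' (va n hn) = vb n hn) :
    (outSet n π').ncard = (Dse n π').ncard + 1 := by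
  rw [Dse, Set.ncard_image_of_injOn (snd_injOn hπ'),
    outSet_decomp hn hπ' hpair,
    Set.ncard_insert_of_notMem (vab_not_mem_Slo hn) (Set.toFinite _)]

lemma outSet_mk (hn : 2 ≤ n) (hπ' : IsLinkPattern n π')
    (hpair : π' (va n hn) = vb n hn)
    (hS : (y, x) ∈ outSet n π') (hx2 : (x:ℕ) < 2*n-2) :
    outSet n (mk n hn π' x y) =
      insert (y, vb n hn) {p ∈ outSet n π' | p.2 < y} := by
  have hyx : y < x := hS.1
  have hyx' : (y:ℕ) < (x:ℕ) := hyx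
  have hκ := mk_isLP hn hπ' hpair hS hx2
  ext p
  constructor
  · rintro ⟨hp1, hp2, hp3⟩
    by_cases hu4 : p.1 = y
    · left
      exact Prod.ext hu4 (by rw [← hp2, hu4, mk_y hn hyx hx2])
    by_cases hu2 : p.1 = x
    · exfalso
      have hp2' : p.2 = va n hn := by rw [← hp2, hu2, mk_x hn hx2]
      apply hp3 y (vb n hn)
      · rw [hu2]; exact hyx
      · rw [hp2']; exact Fin.lt_def.mpr (by simp only [va_val, vb_val]; omega)
      · exact mk_y hn hyx hx2
    by_cases hu1 : p.1 = va n hn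
    · exfalso
      have hp2' : p.2 = x := by rw [← hp2, hu1, mk_va hn]
      have : (p.1:ℕ) < (p.2:ℕ) := hp1
      rw [hu1, hp2'] at this
      simp only [va_val] at this
      omega
    by_cases hu3 : p.1 = vb n hn
    · exfalso
      have : (p.1:ℕ) < (p.2:ℕ) := hp1
      rw [hu3] at this
      simp only [vb_val] at this
      have := p.2.2
      omega
    have hp2' : π' p.1 = p.2 := by rw [← hp2, mk_other hn hu1 hu2 hu3 hu4]
    -- p.2 is not special
    have hv1 : p.2 ≠ va n hn := by
      intro hh
      apply hu3
      rw [← hπ'.1 p.1, hp2', hh, hpair]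
    have hv3 : p.2 ≠ vb n hn := by
      intro hh
      apply hu1
      rw [← hπ'.1 p.1, hp2', hh, pi_vb hn hπ' hpair]
    have hv2 : p.2 ≠ x := by
      intro hh
      apply hu4
      rw [← hπ'.1 p.1, hp2', hh, pi_x hn hπ' hS]
    have hv4 : p.2 ≠ y := by
      intro hh
      apply hu2
      rw [← hπ'.1 p.1, hp2', hh, hS.2.1]
    have hv2n : (p.2:ℕ) < 2*n-2 := by
      have := p.2.2
      have g1 : (p.2:ℕ) ≠ 2*n-2 := fun hh => hv1 (Fin.ext_iff.mpr hh)
      have g2 : (p.2:ℕ) ≠ 2*n-1 := fun hh => hv3 (Fin.ext_iff.mpr hh)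
      omega
    rcases lt_trichotomy p.2 y with hvy | hvy | hvy
    · -- in the small part
      right
      refine ⟨⟨hp1, hp2', ?_⟩, hvy⟩
      intro c d hc hd hcd
      have hcv : (c:ℕ) < (p.1:ℕ) := hc
      have hpv : (p.1:ℕ) < (p.2:ℕ) := hp1
      have hvyv : (p.2:ℕ) < (y:ℕ) := hvy
      have g1 : c ≠ va n hn := Fin.ne_of_val_ne (by simp only [va_val]; omega)
      have g2 : c ≠ x := Fin.ne_of_val_ne (by omega)
      have g3 : c ≠ vb n hn := Fin.ne_of_val_ne (by simp only [vb_val]; omega)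
      have g4 : c ≠ y := Fin.ne_of_val_ne (by omega)
      apply hp3 c d hc hd
      rw [mk_other hn g1 g2 g3 g4, hcd]
    · exact absurd hvy hv4
    · exfalso
      rcases lt_trichotomy p.1 y with huy | huy | huy
      · -- crossing in mk
        have hvvb : p.2 < vb n hn := Fin.lt_def.mpr (by simp only [vb_val]; omega)
        exact hκ.2.2 p.1 y p.2 (vb n hn) huy hvy hvvb hp2 (mk_y hn hyx hx2)
      · exact hu4 huy
      · apply hp3 y (vb n hn) huy
          (Fin.lt_def.mpr (by simp only [vb_val]; omega))
          (mk_y hn hyx hx2)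
  · intro hp
    rcases hp with hp | hp
    · rw [hp]
      refine ⟨Fin.lt_def.mpr (by simp only [vb_val]; omega), mk_y hn hyx hx2, ?_⟩
      intro c d hc hd hcd
      have : (2*n-1:ℕ) < (d:ℕ) := hd
      have := d.2
      omega
    · obtain ⟨⟨hp1, hp2, hp3⟩, hpy⟩ := hp
      have hpv : (p.1:ℕ) < (p.2:ℕ) := hp1
      have hvyv : (p.2:ℕ) < (y:ℕ) := hpy
      have g1 : p.1 ≠ va n hn := Fin.ne_of_val_ne (by simp only [va_val]; omega)
      have g2 : p.1 ≠ x := Fin.ne_of_val_ne (by omega)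
      have g3 : p.1 ≠ vb n hn := Fin.ne_of_val_ne (by simp only [vb_val]; omega)
      have g4 : p.1 ≠ y := Fin.ne_of_val_ne (by omega)
      refine ⟨hp1, by rw [mk_other hn g1 g2 g3 g4, hp2], ?_⟩
      intro c d hc hd hcd
      have hcv : (c:ℕ) < (p.1:ℕ) := hc
      have k1 : c ≠ va n hn := Fin.ne_of_val_ne (by simp only [va_val]; omega)
      have k2 : c ≠ x := Fin.ne_of_val_ne (by omega)
      have k3 : c ≠ vb n hn := Fin.ne_of_val_ne (by simp only [vb_val]; omega)
      have k4 : c ≠ y := Fin.ne_of_val_ne (by omega)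
      rw [mk_other hn k1 k2 k3 k4] at hcd
      exact hp3 c d hc hd hcd

lemma exposure_mk (hn : 2 ≤ n) (hπ' : IsLinkPattern n π')
    (hpair : π' (va n hn) = vb n hn)
    (hS : (y, x) ∈ outSet n π') (hx2 : (x:ℕ) < 2*n-2) :
    exposure n (mk n hn π' x y) = rkD n π' x := by
  have hyx : y < x := hS.1
  have hyx' : (y:ℕ) < (x:ℕ) := hyx
  have hxS : x ∈ Dse n π' := ⟨(y,x), ⟨hS, hx2⟩, rfl⟩
  rw [exposure_eq, outSet_mk hn hπ' hpair hS hx2]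
  have hnm : (y, vb n hn) ∉ {p ∈ outSet n π' | p.2 < y} := by
    intro h
    have : ((vb n hn : Fin (2*n)) : ℕ) < (y:ℕ) := h.2
    simp only [vb_val] at this
    have := y.2
    omega
  rw [Set.ncard_insert_of_notMem hnm (Set.toFinite _)]
  -- {p ∈ outSet π' | p.2 < y} = {q ∈ Slo | q.2 ≤ x} \ {(y,x)}
  have hAB : {p ∈ outSet n π' | p.2 < y} = {q ∈ Slo n π' | q.2 ≤ x} \ {(y, x)} := by
    ext q
    constructor
    · rintro ⟨hq, hqy⟩
      have hqv : (q.2:ℕ) < (y:ℕ) := hqy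
      refine ⟨⟨⟨hq, by omega⟩, ?_⟩, ?_⟩
      · exact le_of_lt (Fin.lt_def.mpr (by omega))
      · intro hh
        rw [Set.mem_singleton_iff] at hh
        have hq2 : q.2 = x := by rw [hh]
        rw [hq2] at hqv
        omega
    · rintro ⟨⟨⟨hq, hq2⟩, hqx⟩, hne⟩
      refine ⟨hq, ?_⟩
      rcases disj hπ' hq hS (fun hh => hne hh) with h | h
      · exact h
      · exfalso
        have h1 : (x:ℕ) < (q.1:ℕ) := h
        have h2 : (q.1:ℕ) < (q.2:ℕ) := hq.1
        have h3 : (q.2:ℕ) ≤ (x:ℕ) := hqx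
        omega
  rw [hAB]
  have hmem : (y, x) ∈ {q ∈ Slo n π' | q.2 ≤ x} := ⟨⟨hS, hx2⟩, le_refl x⟩
  rw [Set.ncard_diff_singleton_of_mem hmem]
  have hpos : 1 ≤ {q ∈ Slo n π' | q.2 ≤ x}.ncard :=
    (Set.ncard_pos (Set.toFinite _)).mpr ⟨(y,x), hmem⟩
  have himg : {d ∈ Dse n π' | d ≤ x} = Prod.snd '' {q ∈ Slo n π' | q.2 ≤ x} := by
    ext d
    constructor
    · rintro ⟨⟨q, hq, rfl⟩, hdx⟩
      exact ⟨q, ⟨hq, hdx⟩, rfl⟩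
    · rintro ⟨q, ⟨hq, hqx⟩, rfl⟩
      exact ⟨⟨q, hq, rfl⟩, hqx⟩
  rw [rkD, himg, Set.ncard_image_of_injOn ((snd_injOn hπ').mono (fun q hq => hq.1))]
  omega

end TLP2

open TLP TLP2 in
/-- For `n ≥ 2` and a link pattern `π'` of `n` strands pairing `2n-2` with `2n-1`
with exposure number `m`: the exposure number is a bijection from the fiber
`e⁻¹(π')` onto `{1, …, m}`, i.e. every element of the fiber has exposure number in
`{1, …, m}` and for each `1 ≤ j ≤ m` there is exactly one `μ` in the fiber with
exposure number `j`. -/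
theorem eFun_fiber_exposure_bijection (n : ℕ) (hn : 2 ≤ n)
    (π' : Fin (2*n) → Fin (2*n)) (hπ' : IsLinkPattern n π')
    (hpair : π' ⟨2*n - 2, by omega⟩ = (⟨2*n - 1, by omega⟩ : Fin (2*n)))
    (m : ℕ) (hm : exposure n π' = m) :
    (∀ μ : Fin (2*n) → Fin (2*n), IsLinkPattern n μ → eFun n μ = π' →
        1 ≤ exposure n μ ∧ exposure n μ ≤ m) ∧
    (∀ j : ℕ, 1 ≤ j → j ≤ m →
        ∃! μ : {μ : Fin (2*n) → Fin (2*n) // IsLinkPattern n μ},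
          eFun n μ.1 = π' ∧ exposure n μ.1 = j) := by
  have hpair' : π' (va n hn) = vb n hn := hpair
  have hDcard : (Dse n π').ncard + 1 = m := by
    rw [← hm, TLP.exposure_eq, ncard_outSet hn hπ' hpair']
  constructor
  · intro μ hμ hE
    by_cases hab : μ (va n hn) = vb n hn
    · have hμπ : μ = π' := by rw [← hE, eFun_of_pair hn hab]
      rw [hμπ, hm]
      exact ⟨by omega, le_rfl⟩
    · obtain ⟨hS, hx2, hrepr⟩ := fiber_struct hn hμ hE hab
      have hexpEq : exposure n μ = rkD n π' (μ (va n hn)) := by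
        conv_lhs => rw [hrepr]
        exact exposure_mk hn hπ' hpair' hS hx2
      have hxD : μ (va n hn) ∈ Dse n π' :=
        ⟨(μ (vb n hn), μ (va n hn)), ⟨hS, hx2⟩, rfl⟩
      have h1 : 1 ≤ rkD n π' (μ (va n hn)) :=
        (Set.ncard_pos (Set.toFinite _)).mpr ⟨μ (va n hn), hxD, le_rfl⟩
      have h2 : rkD n π' (μ (va n hn)) ≤ (Dse n π').ncard :=
        Set.ncard_le_ncard (fun d hd => hd.1) (Set.toFinite _)
      rw [hexpEq]
      exact ⟨h1, by omega⟩
  · intro j hj1 hj2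
    by_cases hjm : j = m
    · refine ⟨⟨π', hπ'⟩, ⟨eFun_of_pair hn hpair', by rw [hm, hjm]⟩, ?_⟩
      rintro ⟨μ, hμ⟩ ⟨hE, hexp⟩
      apply Subtype.ext
      by_cases hab : μ (va n hn) = vb n hn
      · show μ = π'
        rw [← hE, eFun_of_pair hn hab]
      · exfalso
        obtain ⟨hS, hx2, hrepr⟩ := fiber_struct hn hμ hE hab
        have hexpEq : exposure n μ = rkD n π' (μ (va n hn)) := by
          conv_lhs => rw [hrepr]
          exact exposure_mk hn hπ' hpair' hS hx2
        have h2 : rkD n π' (μ (va n hn)) ≤ (Dse n π').ncard :=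
          Set.ncard_le_ncard (fun d hd => hd.1) (Set.toFinite _)
        have hexp' : exposure n μ = j := hexp
        rw [hexpEq] at hexp'
        omega
    · have hjlt : j ≤ (Dse n π').ncard := by omega
      obtain ⟨d, ⟨hdD, hdrk⟩, huniq⟩ := rank_bij (Dse n π') (Set.toFinite _) j hj1 hjlt
      obtain ⟨hSd, hd2⟩ := (mem_Dse hπ').mp hdD
      refine ⟨⟨mk n hn π' d (π' d), mk_isLP hn hπ' hpair' hSd hd2⟩,
        ⟨mk_eFun hn hπ' hpair' hSd hd2, ?_⟩, ?_⟩
      · rw [exposure_mk hn hπ' hpair' hSd hd2]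
        exact hdrk
      · rintro ⟨μ, hμ⟩ ⟨hE, hexp⟩
        apply Subtype.ext
        by_cases hab : μ (va n hn) = vb n hn
        · exfalso
          have hμπ : μ = π' := by rw [← hE, eFun_of_pair hn hab]
          have hexp' : exposure n μ = j := hexp
          rw [hμπ, hm] at hexp'
          exact hjm hexp'.symm
        · obtain ⟨hS, hx2, hrepr⟩ := fiber_struct hn hμ hE hab
          have hexpEq : exposure n μ = rkD n π' (μ (va n hn)) := by
            conv_lhs => rw [hrepr]
            exact exposure_mk hn hπ' hpair' hS hx2
          have hxD : μ (va n hn) ∈ Dse n π' :=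
            ⟨(μ (vb n hn), μ (va n hn)), ⟨hS, hx2⟩, rfl⟩
          have hexp' : exposure n μ = j := hexp
          have hrkj : rkD n π' (μ (va n hn)) = j := by rw [← hexpEq]; exact hexp'
          have hμd : μ (va n hn) = d :=
            huniq (μ (va n hn)) ⟨hxD, hrkj⟩
          have hμvb : μ (vb n hn) = π' d := by
            have := fst_eq hπ' hS
            rw [← hμd]
            exact this
          show μ = mk n hn π' d (π' d)
          rw [hrepr, hμd, hμvb]
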